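/- Duhamel's formula: for n×n complex matrices A and B, d/ds|_{s=0} e^{A + sB} = ∫_0^1 e^{(1−u)A} B e^{uA} du. -/

import Mathlib

attribute [local instance] Matrix.linftyOpNormedAddCommGroup Matrix.linftyOpNormedRing
  Matrix.linftyOpNormedAlgebra

open NormedSpace intervalIntegral

set_option maxHeartbeats 1000000
set_option synthInstance.maxHeartbeats 200000

variable {n : ℕ}
local notation "M" => Matrix (Fin n) (Fin n) ℂ

section

attribute [-instance] instTopologicalSpaceMatrix Matrix.instUniformSpace

lemma aux_norm_one_le (n : ℕ) : ‖(1 : Matrix (Fin n) (Fin n) ℂ)‖ ≤ 1 := by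
  rcases Nat.eq_zero_or_pos n with h | h
  · subst h
    have : (1 : Matrix (Fin 0) (Fin 0) ℂ) = 0 := Subsingleton.elim _ _
    rw [this, norm_zero]; norm_num
  · haveI : Nonempty (Fin n) := ⟨⟨0, h⟩⟩
    haveI : NormOneClass (Matrix (Fin n) (Fin n) ℂ) := Matrix.linfty_opNormOneClass
    exact le_of_eq norm_one

lemma aux_norm_exp_le (X : M) : ‖exp X‖ ≤ Real.exp ‖X‖ := by
  rw [exp_eq_tsum ℂ]
  refine (norm_tsum_le_tsum_norm (norm_expSeries_summable' X)).trans ?_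
  rw [Real.exp_eq_exp_ℝ, exp_eq_tsum_div]
  refine Summable.tsum_le_tsum (fun i => ?_) (norm_expSeries_summable' X)
    (Real.summable_pow_div_factorial _)
  rw [norm_smul, norm_inv, Complex.norm_natCast, div_eq_inv_mul]
  refine mul_le_mul le_rfl ?_ (norm_nonneg _) (by positivity)
  cases i with
  | zero => simpa using aux_norm_one_le n
  | succ k => exact norm_pow_le' X k.succ_pos

lemma aux_deriv_aux (A C : M) (u₀ : ℝ) :
    HasDerivAt (fun u : ℝ => exp ((1 - u) • A) * exp (u • C))
      (exp ((1 - u₀) • A) * (C - A) * exp (u₀ • C)) u₀ := by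
  have h₁ : HasDerivAt (fun u : ℝ => exp ((1 - u) • A))
      (-(A * exp ((1 - u₀) • A))) u₀ := by
    have := (hasDerivAt_exp_smul_const' (𝕂 := ℝ) A (1 - u₀)).scomp u₀
      ((hasDerivAt_id u₀).const_sub 1)
    simpa [Function.comp_def] using this
  have h₂ : HasDerivAt (fun u : ℝ => exp (u • C)) (C * exp (u₀ • C)) u₀ :=
    hasDerivAt_exp_smul_const' (𝕂 := ℝ) C u₀
  have hc : A * exp ((1 - u₀) • A) = exp ((1 - u₀) • A) * A :=
    (((Commute.refl A).smul_right (1 - u₀)).exp_right).eq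
  have := h₁.mul h₂
  refine HasDerivAt.congr_deriv this ?_
  rw [hc]
  noncomm_ring

lemma aux_integrand_cont (A B C : M) :
    Continuous (fun u : ℝ => exp ((1 - u) • A) * B * exp (u • C)) := by
  have h1 : Continuous fun u : ℝ => exp ((1 - u) • A) :=
    exp_continuous.comp ((continuous_const.sub continuous_id).smul continuous_const)
  have h2 : Continuous fun u : ℝ => exp (u • C) :=
    exp_continuous.comp (continuous_id.smul continuous_const)
  exact (h1.mul continuous_const).mul h2

lemma aux_key (A B : M) (s : ℝ) :
    exp (A + s • B) - exp A =
      s • ∫ u in (0:ℝ)..1, exp ((1 - u) • A) * B * exp (u • (A + s • B)) := by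
  set C := A + s • B with hC
  have hCA : C - A = s • B := by rw [hC]; abel
  have hderiv : ∀ u ∈ Set.uIcc (0:ℝ) 1,
      HasDerivAt (fun u : ℝ => exp ((1 - u) • A) * exp (u • C))
        (s • (exp ((1 - u) • A) * B * exp (u • C))) u := by
    intro u _
    have := aux_deriv_aux A C u
    rw [hCA] at this
    convert this using 1
    rw [mul_smul_comm, smul_mul_assoc]
  have hint : IntervalIntegrable
      (fun u : ℝ => s • (exp ((1 - u) • A) * B * exp (u • C))) MeasureTheory.volume 0 1 :=
    ((aux_integrand_cont A B C).const_smul s).intervalIntegrable 0 1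
  have h := integral_eq_sub_of_hasDerivAt hderiv hint
  rw [integral_smul] at h
  rw [h]
  norm_num [exp_zero]

lemma aux_cont (A B : M) :
    ContinuousAt (fun s : ℝ =>
      ∫ u in (0:ℝ)..1, exp ((1 - u) • A) * B * exp (u • (A + s • B))) 0 := by
  apply intervalIntegral.continuousAt_of_dominated_interval
    (bound := fun _ : ℝ => Real.exp ‖A‖ * ‖B‖ * Real.exp (‖A‖ + ‖B‖))
  · filter_upwards with s
    exact (aux_integrand_cont A B (A + s • B)).aestronglyMeasurable
  · filter_upwards [Metric.ball_mem_nhds (0:ℝ) one_pos] with s hs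
    filter_upwards with u hu
    rw [Set.uIoc_of_le (by norm_num : (0:ℝ) ≤ 1)] at hu
    simp only [Real.norm_eq_abs, Metric.mem_ball, dist_zero_right] at hs
    have hu0 : 0 < u := hu.1
    have hu1 : u ≤ 1 := hu.2
    have hE : ‖exp ((1 - u) • A)‖ ≤ Real.exp ‖A‖ := by
      refine (aux_norm_exp_le _).trans (Real.exp_le_exp.mpr ?_)
      rw [norm_smul, Real.norm_eq_abs]
      calc |1 - u| * ‖A‖ ≤ 1 * ‖A‖ := by
            apply mul_le_mul_of_nonneg_right _ (norm_nonneg _)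
            rw [abs_le]; constructor <;> linarith
        _ = ‖A‖ := one_mul _
    have hF : ‖exp (u • (A + s • B))‖ ≤ Real.exp (‖A‖ + ‖B‖) := by
      refine (aux_norm_exp_le _).trans (Real.exp_le_exp.mpr ?_)
      rw [norm_smul, Real.norm_eq_abs, abs_of_pos hu0]
      calc u * ‖A + s • B‖ ≤ 1 * ‖A + s • B‖ :=
            mul_le_mul_of_nonneg_right hu1 (norm_nonneg _)
        _ = ‖A + s • B‖ := one_mul _
        _ ≤ ‖A‖ + ‖s • B‖ := norm_add_le _ _
        _ ≤ ‖A‖ + ‖B‖ := by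
            rw [norm_smul, Real.norm_eq_abs]
            have : |s| * ‖B‖ ≤ 1 * ‖B‖ :=
              mul_le_mul_of_nonneg_right hs.le (norm_nonneg _)
            linarith [this]
    calc ‖exp ((1 - u) • A) * B * exp (u • (A + s • B))‖
        ≤ ‖exp ((1 - u) • A) * B‖ * ‖exp (u • (A + s • B))‖ := norm_mul_le _ _
      _ ≤ (‖exp ((1 - u) • A)‖ * ‖B‖) * ‖exp (u • (A + s • B))‖ :=
          mul_le_mul_of_nonneg_right (norm_mul_le _ _) (norm_nonneg _)
      _ ≤ (Real.exp ‖A‖ * ‖B‖) * Real.exp (‖A‖ + ‖B‖) := by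
          apply mul_le_mul _ hF (norm_nonneg _) (by positivity)
          exact mul_le_mul_of_nonneg_right hE (norm_nonneg _)
  · exact intervalIntegrable_const
  · filter_upwards with u _
    apply Continuous.continuousAt
    apply Continuous.mul continuous_const
    exact exp_continuous.comp
      (by fun_prop)

theorem duhamel_formula' (A B : M) :
    HasDerivAt (fun s : ℝ => NormedSpace.exp (A + s • B))
      (∫ u in (0 : ℝ)..1,
        NormedSpace.exp ((1 - u) • A) * B * NormedSpace.exp (u • A)) 0 := by
  set G : ℝ → M := fun s =>
    ∫ u in (0:ℝ)..1, exp ((1 - u) • A) * B * exp (u • (A + s • B)) with hG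
  have hG0 : G 0 = ∫ u in (0:ℝ)..1, exp ((1 - u) • A) * B * exp (u • A) := by
    simp [hG]
  rw [hasDerivAt_iff_tendsto_slope, ← hG0]
  have htend : Filter.Tendsto G (nhdsWithin 0 {(0:ℝ)}ᶜ) (nhds (G 0)) :=
    (aux_cont A B).tendsto.mono_left nhdsWithin_le_nhds
  refine htend.congr' ?_
  filter_upwards [self_mem_nhdsWithin] with s hs
  have hs' : s ≠ 0 := hs
  rw [slope_def_module, sub_zero, zero_smul, add_zero, aux_key A B s, smul_smul,
    inv_mul_cancel₀ hs', one_smul]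

end

/-- Duhamel's formula: for `n×n` complex matrices `A` and `B`,
`d/ds|_{s=0} e^{A + sB} = ∫_0^1 e^{(1−u)A} B e^{uA} du`. -/
theorem duhamel_formula {n : ℕ} (A B : Matrix (Fin n) (Fin n) ℂ) :
    HasDerivAt (fun s : ℝ => NormedSpace.exp (A + s • B))
      (∫ u in (0 : ℝ)..1,
        NormedSpace.exp ((1 - u) • A) * B * NormedSpace.exp (u • A)) 0 :=
  duhamel_formula' A B
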